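/- arXiv:2510.07750 — 2 statements merged into one kernel-verified Lean document; each statement's English description precedes it below -/
import Mathlib

section
/- Define f : {-1,1} × [-1,1] → ℝ by f(y,z) = (z-y)² for z ∈ [0,1] and f(y,z) = (z-y)² + 1/4 for z ∈ [-1,0). Let Y take value +1 with probability 0.9 and -1 with probability 0.1. Then E[f(Y, -1)] = 3.85 > E[f(Y, 0)] = 1, where -1 is the robust minimizer of max_{y ∈ {-1}} f(y,z) and 0 is the robust minimizer of max_{y ∈ {-1,+1}} f(y,z); hence majorant consistency fails for the nested uncertainty sets C₁ = {-1} ⊆ C₂ = {-1,+1}. -/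
theorem stmt_13 (f : ℝ → ℝ → ℝ)
    (hf : ∀ y z, f y z = if 0 ≤ z then (z - y) ^ 2 else (z - y) ^ 2 + 1 / 4) :
    IsMinOn (fun z => f (-1) z) (Set.Icc (-1) 1) (-1) ∧
    IsMinOn (fun z => max (f (-1) z) (f 1 z)) (Set.Icc (-1) 1) 0 ∧
    0.9 * f 1 (-1) + 0.1 * f (-1) (-1) = 3.85 ∧
    0.9 * f 1 0 + 0.1 * f (-1) 0 = 1 ∧
    (3.85 : ℝ) > 1 := by
  refine ⟨?_, ?_, ?_, ?_, by norm_num⟩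
  · intro z hz
    simp only [Set.mem_Icc] at hz
    simp only [Set.mem_setOf_eq, hf]
    split_ifs <;> nlinarith [sq_nonneg (z + 1)]
  · intro z hz
    simp only [Set.mem_Icc] at hz
    simp only [Set.mem_setOf_eq, hf]
    rcases le_total 0 z with h | h
    · rw [if_pos h, if_pos h, if_pos le_rfl, if_pos le_rfl]
      rw [show ((0:ℝ) - -1) ^ 2 ⊔ ((0:ℝ) - 1) ^ 2 = 1 by norm_num]
      exact le_max_of_le_left (by nlinarith)
    · rcases eq_or_lt_of_le h with rfl | h'
      · simp
      · rw [if_neg (not_le.2 h'), if_neg (not_le.2 h'), if_pos le_rfl, if_pos le_rfl]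
        rw [show ((0:ℝ) - -1) ^ 2 ⊔ ((0:ℝ) - 1) ^ 2 = 1 by norm_num]
        exact le_max_of_le_right (by nlinarith)
  · rw [hf, hf]; norm_num
  · rw [hf, hf]; norm_num
end

section
/- With f and Y as in the counterexample (f(y,z) = (z-y)² plus a penalty 1/4 when z < 0; P[Y=1]=0.9), the oracle costs are min_{z∈[-1,1]} f(1,z) = 0 (at z=1) and min_{z∈[-1,1]} f(-1,z) = 1/4 (at z=-1). The expected regrets of the robust decisions are α_R(λ₁) = E[f(Y,-1) - min_z f(Y,z)] = 3.6 + 0.9·0.25 = 3.825 and α_R(λ₂) = E[f(Y,0) - min_z f(Y,z)] = 0.9 + 0.1·0.75 = 0.975, so α_R(λ₁) > α_R(λ₂): expected regret is not monotone increasing in the uncertainty-set size. -/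
theorem stmt_14 (f : ℝ → ℝ → ℝ)
    (hf : ∀ y z, f y z = if 0 ≤ z then (z - y) ^ 2 else (z - y) ^ 2 + 1 / 4) :
    IsMinOn (f 1) (Set.Icc (-1) 1) 1 ∧ f 1 1 = 0 ∧
    IsMinOn (f (-1)) (Set.Icc (-1) 1) (-1) ∧ f (-1) (-1) = 1 / 4 ∧
    0.9 * (f 1 (-1) - 0) + 0.1 * (f (-1) (-1) - 1 / 4) = 3.825 ∧
    0.9 * (f 1 0 - 0) + 0.1 * (f (-1) 0 - 1 / 4) = 0.975 ∧
    (3.825 : ℝ) > 0.975 := by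
  refine ⟨?_, ?_, ?_, ?_, ?_, ?_, by norm_num⟩
  · intro z _
    show f 1 1 ≤ f 1 z
    rw [hf, hf]
    split_ifs <;> nlinarith [sq_nonneg (z - 1)]
  · simp [hf]
  · intro z hz
    show f (-1) (-1) ≤ f (-1) z
    rw [hf, hf]
    simp only [Set.mem_Icc] at hz
    split_ifs <;> nlinarith [sq_nonneg (z + 1)]
  · rw [hf]; norm_num
  · rw [hf, hf]; norm_num
  · rw [hf, hf]; norm_num
end
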